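/- Let k, m ∈ ℕ with k ≤ m, 0 < τ < 1 and θ := k/(m+τ). Then there is a constant C such that ‖f‖_{C^k_b(ℝⁿ)} ≤ C ‖f‖_{C^0_b(ℝⁿ)}^{1-θ} ‖f‖_{C^{m,τ}(ℝⁿ)}^{θ} for all f ∈ C^{m,τ}(ℝⁿ). -/

import Mathlib

noncomputable section

variable {n : ℕ} {F : Type*} [NormedAddCommGroup F] [NormedSpace ℝ F]

/-- Sup of the norms of all derivatives of order `≤ k` (the `C^k_b` norm). -/
noncomputable def CbNorm (k : ℕ) (f : EuclideanSpace ℝ (Fin n) → F) : ℝ :=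
  ⨆ i : Fin (k + 1), ⨆ x, ‖iteratedFDeriv ℝ i.val f x‖

open Classical in
/-- Hölder seminorm of exponent `τ`: `sup_{x ≠ y} ‖g x - g y‖ / ‖x-y‖^τ`. -/
noncomputable def holderSemi (τ : ℝ) (g : EuclideanSpace ℝ (Fin n) → F) : ℝ :=
  ⨆ p : EuclideanSpace ℝ (Fin n) × EuclideanSpace ℝ (Fin n),
    if p.1 = p.2 then 0 else ‖g p.1 - g p.2‖ / ‖p.1 - p.2‖ ^ τ

/-- The `C^{m,τ}` (Hölder) norm: `C^m_b` norm plus the Hölder seminorms of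
all derivatives of order `≤ m`. -/
noncomputable def CmTauNorm (m : ℕ) (τ : ℝ) (f : EuclideanSpace ℝ (Fin n) → F) : ℝ :=
  CbNorm m f + ⨆ i : Fin (m + 1), holderSemi τ (iteratedFDeriv ℝ i.val f)

/-- Membership in the Hölder space `C^{m,τ}(ℝⁿ)`: `f` is `m` times continuously
differentiable, all derivatives up to order `m` are bounded and `τ`-Hölder continuous. -/
def MemHolderSpace (m : ℕ) (τ : ℝ) (f : EuclideanSpace ℝ (Fin n) → F) : Prop :=
  ContDiff ℝ m f ∧
    (∀ i ≤ m, ∃ C : ℝ, ∀ x, ‖iteratedFDeriv ℝ i f x‖ ≤ C) ∧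
    (∀ i ≤ m, ∃ C : ℝ, ∀ x y,
      ‖iteratedFDeriv ℝ i f x - iteratedFDeriv ℝ i f y‖ ≤ C * ‖x - y‖ ^ τ)

end

open Real Set Filter Topology

/-! ### Auxiliary lemmas for the interpolation inequality -/

private lemma log_tele (p : ℕ → ℝ) (j : ℕ) :
    p j = p 0 + ∑ i ∈ Finset.range j, (p (i + 1) - p i) := by
  induction j with
  | zero => simp
  | succ j ih => rw [Finset.sum_range_succ]; linarith

private lemma log_chain (m : ℕ) {L : ℝ} (hL : 0 ≤ L) (d : ℕ → ℝ)
    (hd : ∀ j, 1 ≤ j → j + 1 ≤ m → d j ≤ d (j + 1) + L) :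
    ∀ i j, 1 ≤ i → i ≤ j → j ≤ m → d i ≤ d j + ((j - i : ℕ) : ℝ) * L := by
  intro i j hi hij hjm
  induction j, hij using Nat.le_induction with
  | base => simp
  | succ j hij ih =>
    have h1 : d i ≤ d j + ((j - i : ℕ) : ℝ) * L := ih (by omega)
    have h2 : d j ≤ d (j + 1) + L := hd j (by omega) (by omega)
    have h3 : ((j + 1 - i : ℕ) : ℝ) = ((j - i : ℕ) : ℝ) + 1 := by
      have e : j + 1 - i = (j - i) + 1 := by omega
      rw [e]; push_cast; ring
    rw [h3]; linarith

private lemma log_interp (m k : ℕ) (hk1 : 1 ≤ k) (hkm : k ≤ m) {τ L : ℝ}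
    (hτ0 : 0 < τ) (hτ1 : τ < 1) (hL : 0 ≤ L) (p : ℕ → ℝ) (q : ℝ)
    (hmid : ∀ j, 1 ≤ j → j + 1 ≤ m → 2 * p j ≤ L + p (j - 1) + p (j + 1))
    (htop : (1 + τ) * p m ≤ L + q + τ * p (m - 1)) :
    p k ≤ (1 - (k : ℝ) / ((m : ℝ) + τ)) * p 0 + ((k : ℝ) / ((m : ℝ) + τ)) * q
      + ((2 * m * m + 2 * m + 1 : ℕ) : ℝ) * L := by
  set d : ℕ → ℝ := fun j => p j - p (j - 1) with hd_def
  have hd : ∀ j, 1 ≤ j → j + 1 ≤ m → d j ≤ d (j + 1) + L := by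
    intro j hj1 hjm
    have h := hmid j hj1 hjm
    simp only [hd_def]
    have e : j + 1 - 1 = j := by omega
    rw [e]; linarith
  have chain := log_chain m hL d hd
  have hm1 : 1 ≤ m := le_trans hk1 hkm
  have hmk : ((m - k : ℕ) : ℝ) = (m : ℝ) - (k : ℝ) := Nat.cast_sub hkm
  have ha : p k ≤ p 0 + (k : ℝ) * (d k + (m : ℝ) * L) := by
    have hsum := Finset.sum_le_card_nsmul (Finset.range k) (fun i => p (i + 1) - p i)
      (d k + (m : ℝ) * L) (by
        intro i hi
        simp only [Finset.mem_range] at hi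
        show p (i + 1) - p i ≤ d k + (m : ℝ) * L
        have e : p (i + 1) - p i = d (i + 1) := by simp [hd_def]
        rw [e]
        have h1 := chain (i + 1) k (by omega) (by omega) hkm
        have h2 : ((k - (i + 1) : ℕ) : ℝ) ≤ (m : ℝ) := by
          have : k - (i + 1) ≤ m := by omega
          exact_mod_cast this
        nlinarith [mul_le_mul_of_nonneg_right h2 hL])
    rw [log_tele p k]
    simp only [Finset.card_range, nsmul_eq_mul] at hsum
    linarith
  have hb : p k + ((m : ℝ) - (k : ℝ)) * (d k - (m : ℝ) * L) ≤ p m := by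
    have hsum := Finset.card_nsmul_le_sum (Finset.Ico k m) (fun i => p (i + 1) - p i)
      (d k - (m : ℝ) * L) (by
        intro i hi
        simp only [Finset.mem_Ico] at hi
        show d k - (m : ℝ) * L ≤ p (i + 1) - p i
        have e : p (i + 1) - p i = d (i + 1) := by simp [hd_def]
        rw [e]
        have h1 := chain k (i + 1) hk1 (by omega) (by omega)
        have h2 : ((i + 1 - k : ℕ) : ℝ) ≤ (m : ℝ) := by
          have : i + 1 - k ≤ m := by omega
          exact_mod_cast this
        nlinarith [mul_le_mul_of_nonneg_right h2 hL])
    have hIco : ∑ i ∈ Finset.Ico k m, (p (i + 1) - p i) = p m - p k := by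
      rw [Finset.sum_Ico_eq_sub _ hkm]
      rw [log_tele p m, log_tele p k]; ring
    simp only [Nat.card_Ico, nsmul_eq_mul] at hsum
    rw [hIco, hmk] at hsum
    linarith
  have hc : d k - (m : ℝ) * L ≤ d m := by
    have h1 := chain k m hk1 hkm le_rfl
    have h2 : ((m - k : ℕ) : ℝ) ≤ (m : ℝ) := by
      have : m - k ≤ m := by omega
      exact_mod_cast this
    nlinarith [mul_le_mul_of_nonneg_right h2 hL]
  have hdm : τ * d m ≤ L + q - p m := by
    have e : d m = p m - p (m - 1) := rfl
    rw [e]; linarith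
  have hkm' : (k : ℝ) ≤ (m : ℝ) := by exact_mod_cast hkm
  have key1 : p k + ((m : ℝ) - (k : ℝ) + τ) * d k ≤ q + ((m:ℝ) * m + m + 1) * L := by
    have t1 : τ * (d k - (m : ℝ) * L) ≤ τ * d m := mul_le_mul_of_nonneg_left hc hτ0.le
    have t2 : ((m : ℝ) - (k : ℝ)) * ((m:ℝ) * L) ≤ (m : ℝ) * ((m:ℝ) * L) := by
      have hk0' : (0:ℝ) ≤ (k : ℝ) := by positivity
      apply mul_le_mul_of_nonneg_right (by linarith) (by positivity)
    have t3 : τ * ((m:ℝ) * L) ≤ 1 * ((m:ℝ) * L) :=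
      mul_le_mul_of_nonneg_right hτ1.le (by positivity)
    nlinarith [hb, hdm, t1, t2, t3]
  have hk0 : (0:ℝ) < (k : ℝ) := by exact_mod_cast hk1
  have hmτ : (0:ℝ) < (m : ℝ) + τ := by positivity
  have final' : ((m:ℝ) + τ) * p k ≤ ((m : ℝ) - (k : ℝ) + τ) * p 0 + (k : ℝ) * q
      + (((m:ℝ) + τ) * (2*(m:ℝ)*m + 2*m + 1)) * L := by
    have hs0 : (0:ℝ) ≤ (m : ℝ) - (k : ℝ) + τ := by linarith
    have e1 : ((m : ℝ) - (k : ℝ) + τ) * (p k - p 0 - (k:ℝ) * ((m:ℝ) * L))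
        ≤ ((m : ℝ) - (k : ℝ) + τ) * ((k:ℝ) * d k) := by
      apply mul_le_mul_of_nonneg_left _ hs0
      nlinarith [ha]
    have e2 : (k:ℝ) * (p k + ((m : ℝ) - (k : ℝ) + τ) * d k)
        ≤ (k:ℝ) * (q + ((m:ℝ) * m + m + 1) * L) :=
      mul_le_mul_of_nonneg_left key1 hk0.le
    have c1 : ((m : ℝ) - (k : ℝ) + τ) * ((k:ℝ) * ((m:ℝ) * L))
        ≤ ((m:ℝ) + τ) * ((m:ℝ) * ((m:ℝ) * L)) := by
      gcongr <;> linarith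
    have c2 : (k:ℝ) * (((m:ℝ) * m + m + 1) * L) ≤ ((m:ℝ) + τ) * (((m:ℝ) * m + m + 1) * L) := by
      apply mul_le_mul_of_nonneg_right (by linarith) (by positivity)
    have c3 : (0:ℝ) ≤ ((m:ℝ) + τ) * ((m:ℝ) * L) := by positivity
    linarith [e1, e2, c1, c2, c3]
  have eq1 : 1 - (k : ℝ) / ((m : ℝ) + τ) = ((m : ℝ) - (k : ℝ) + τ) / ((m:ℝ) + τ) := by
    field_simp; ring
  rw [eq1, ← mul_le_mul_iff_right₀ hmτ]
  have hcast : ((2 * m * m + 2 * m + 1 : ℕ) : ℝ) = 2*(m:ℝ)*m + 2*m + 1 := by push_cast; ring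
  have eq2 : ((m:ℝ) + τ) * (((m : ℝ) - (k : ℝ) + τ) / ((m:ℝ) + τ) * p 0
      + (k : ℝ) / ((m : ℝ) + τ) * q + ((2 * m * m + 2 * m + 1 : ℕ) : ℝ) * L)
      = ((m : ℝ) - (k : ℝ) + τ) * p 0 + (k:ℝ) * q
        + (((m:ℝ) + τ) * (2*(m:ℝ)*m + 2*m + 1)) * L := by
    rw [hcast]; field_simp
  rw [eq2]
  exact final'

private lemma discrete_pos (m k : ℕ) (hk1 : 1 ≤ k) (hkm : k ≤ m) {τ : ℝ}
    (hτ0 : 0 < τ) (hτ1 : τ < 1) (P : ℕ → ℝ) (Q : ℝ) (hP : ∀ j, 0 < P j) (hQ : 0 < Q)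
    (hmid : ∀ j, 1 ≤ j → j + 1 ≤ m → ∀ h : ℝ, 0 < h → P j ≤ 2 * P (j - 1) / h + h * P (j + 1))
    (htop : ∀ h : ℝ, 0 < h → P m ≤ 2 * P (m - 1) / h + h ^ τ * Q) :
    P k ≤ (16:ℝ) ^ (2 * m * m + 2 * m + 1)
      * (P 0 ^ (1 - (k : ℝ) / ((m : ℝ) + τ)) * Q ^ ((k : ℝ) / ((m : ℝ) + τ))) := by
  have hL : (0:ℝ) ≤ Real.log 16 := Real.log_nonneg (by norm_num)
  have hmid' : ∀ j, 1 ≤ j → j + 1 ≤ m →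
      2 * Real.log (P j) ≤ Real.log 16 + Real.log (P (j - 1)) + Real.log (P (j + 1)) := by
    intro j hj1 hjm
    have ha := hP (j - 1); have hb := hP j; have hc := hP (j + 1)
    have key := hmid j hj1 hjm (P j / (2 * P (j + 1))) (by positivity)
    have e1 : 2 * P (j - 1) / (P j / (2 * P (j + 1))) = 4 * P (j - 1) * P (j + 1) / P j := by
      field_simp; ring
    have e2 : P j / (2 * P (j + 1)) * P (j + 1) = P j / 2 := by
      field_simp
    rw [e1, e2] at key
    have key2 : P j / 2 ≤ 4 * P (j - 1) * P (j + 1) / P j := by linarith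
    have key3 : P j * P j ≤ 16 * (P (j - 1) * P (j + 1)) := by
      rw [div_le_div_iff₀ (by norm_num) hb] at key2
      nlinarith
    have lg := Real.log_le_log (by positivity) key3
    rw [Real.log_mul (show (16:ℝ) ≠ 0 by norm_num) (by positivity),
        Real.log_mul ha.ne' hc.ne'] at lg
    calc 2 * Real.log (P j) = Real.log (P j * P j) := by
          rw [Real.log_mul hb.ne' hb.ne']; ring
      _ ≤ _ := by linarith
  have htop' : (1 + τ) * Real.log (P m)
      ≤ Real.log 16 + Real.log Q + τ * Real.log (P (m - 1)) := by
    have ha := hP (m - 1); have hb := hP m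
    set h : ℝ := (P m / (2 * Q)) ^ τ⁻¹ with hh_def
    have hh : 0 < h := Real.rpow_pos_of_pos (by positivity) _
    have hhτ : h ^ τ = P m / (2 * Q) := by
      rw [hh_def, ← Real.rpow_mul (by positivity), inv_mul_cancel₀ hτ0.ne', Real.rpow_one]
    have key := htop h hh
    rw [hhτ] at key
    have e2 : P m / (2 * Q) * Q = P m / 2 := by field_simp
    rw [e2] at key
    have key2 : P m / 2 ≤ 2 * P (m - 1) / h := by linarith
    rw [div_le_div_iff₀ (by norm_num) hh] at key2
    have key4 : P m * h ≤ 4 * P (m - 1) := by linarith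
    have rp := Real.rpow_le_rpow (by positivity) key4 hτ0.le
    rw [Real.mul_rpow hb.le hh.le, hhτ, Real.mul_rpow (by norm_num) ha.le] at rp
    have h4 : (4:ℝ) ^ τ ≤ 4 := by
      calc (4:ℝ) ^ τ ≤ (4:ℝ) ^ (1:ℝ) := Real.rpow_le_rpow_of_exponent_le (by norm_num) hτ1.le
        _ = 4 := Real.rpow_one 4
    have key5 : P m ^ τ * (P m / (2 * Q)) ≤ 4 * P (m - 1) ^ τ := by
      calc P m ^ τ * (P m / (2 * Q)) ≤ (4:ℝ) ^ τ * P (m - 1) ^ τ := rp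
        _ ≤ 4 * P (m - 1) ^ τ := by
            apply mul_le_mul_of_nonneg_right h4 (Real.rpow_nonneg ha.le _)
    have key6 : P m ^ τ * P m ≤ 8 * Q * P (m - 1) ^ τ := by
      rw [mul_div_assoc'] at key5
      rw [div_le_iff₀ (by positivity : (0:ℝ) < 2 * Q)] at key5
      nlinarith [key5, Real.rpow_nonneg ha.le τ, hQ]
    have lg := Real.log_le_log (by positivity) key6
    rw [Real.log_mul (by positivity) hb.ne', Real.log_rpow hb,
        Real.log_mul (by positivity) (Real.rpow_pos_of_pos ha _).ne',
        Real.log_mul (by norm_num) hQ.ne', Real.log_rpow ha] at lg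
    have l8 : Real.log 8 ≤ Real.log 16 := Real.log_le_log (by norm_num) (by norm_num)
    linarith
  have conc := log_interp m k hk1 hkm hτ0 hτ1 hL (fun j => Real.log (P j)) (Real.log Q)
    hmid' htop'
  have hPk := hP k; have hP0 := hP 0
  set θ : ℝ := (k : ℝ) / ((m : ℝ) + τ) with hθ_def
  calc P k = Real.exp (Real.log (P k)) := (Real.exp_log hPk).symm
    _ ≤ Real.exp ((1 - θ) * Real.log (P 0) + θ * Real.log Q
        + ((2 * m * m + 2 * m + 1 : ℕ) : ℝ) * Real.log 16) := Real.exp_le_exp.mpr conc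
    _ = (16:ℝ) ^ (2 * m * m + 2 * m + 1)
        * (P 0 ^ (1 - θ) * Q ^ θ) := by
      rw [Real.exp_add, Real.exp_add]
      rw [show (1 - θ) * Real.log (P 0) = Real.log (P 0) * (1 - θ) by ring,
          show θ * Real.log Q = Real.log Q * θ by ring,
          show ((2 * m * m + 2 * m + 1 : ℕ) : ℝ) * Real.log 16
            = Real.log 16 * ((2 * m * m + 2 * m + 1 : ℕ) : ℝ) by ring]
      rw [← Real.rpow_def_of_pos hP0, ← Real.rpow_def_of_pos hQ,
          ← Real.rpow_def_of_pos (by norm_num : (0:ℝ) < 16)]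
      rw [Real.rpow_natCast]
      ring

private lemma landau_core {E G : Type*} [NormedAddCommGroup E] [NormedSpace ℝ E]
    [NormedAddCommGroup G] [NormedSpace ℝ G]
    (g : E → G) (hg : Differentiable ℝ g) {S ω h : ℝ} (hh : 0 < h)
    (hS : ∀ x, ‖g x‖ ≤ S)
    (hω : ∀ x y : E, ‖y - x‖ ≤ h → ‖fderiv ℝ g y - fderiv ℝ g x‖ ≤ ω)
    (x : E) : ‖fderiv ℝ g x‖ ≤ 2 * S / h + ω := by
  have hS0 : 0 ≤ S := (norm_nonneg _).trans (hS x)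
  have hω0 : 0 ≤ ω := by
    have := hω x x (by simp [hh.le])
    simpa using this
  refine ContinuousLinearMap.opNorm_le_bound _ (by positivity) fun v => ?_
  rcases eq_or_ne v 0 with rfl | hv
  · simp
  · have hvn : 0 < ‖v‖ := norm_pos_iff.mpr hv
    set y := x + (h / ‖v‖) • v with hy_def
    have hyx : y - x = (h / ‖v‖) • v := by rw [hy_def]; abel
    have hnyx : ‖y - x‖ = h := by
      rw [hyx, norm_smul, Real.norm_of_nonneg (by positivity)]
      field_simp
    have hball : y ∈ Metric.closedBall x h := by
      rw [Metric.mem_closedBall, dist_eq_norm]; rw [hnyx]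
    have key : ‖g y - g x - (fderiv ℝ g x) (y - x)‖ ≤ ω * ‖y - x‖ := by
      refine (convex_closedBall x h).norm_image_sub_le_of_norm_fderiv_le'
        (fun z _ => hg z) (fun z hz => ?_)
        (Metric.mem_closedBall_self hh.le) hball
      exact hω x z (by rw [← dist_eq_norm]; exact hz)
    have h1 : ‖(fderiv ℝ g x) (y - x)‖ ≤ 2 * S + ω * h := by
      have h2 : ‖g y - g x‖ ≤ 2 * S := by
        calc ‖g y - g x‖ ≤ ‖g y‖ + ‖g x‖ := norm_sub_le _ _
          _ ≤ 2 * S := by linarith [hS x, hS y]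
      calc ‖(fderiv ℝ g x) (y - x)‖
          ≤ ‖g y - g x‖ + ‖g y - g x - (fderiv ℝ g x) (y - x)‖ := by
            have e : g y - g x - (g y - g x - (fderiv ℝ g x) (y - x))
                = (fderiv ℝ g x) (y - x) := by abel
            calc ‖(fderiv ℝ g x) (y - x)‖
                = ‖g y - g x - (g y - g x - (fderiv ℝ g x) (y - x))‖ := by rw [e]
              _ ≤ ‖g y - g x‖ + ‖g y - g x - (fderiv ℝ g x) (y - x)‖ := norm_sub_le _ _
        _ ≤ 2 * S + ω * h := by rw [hnyx] at key; linarith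
    have h3 : (fderiv ℝ g x) (y - x) = (h / ‖v‖) • (fderiv ℝ g x) v := by
      rw [hyx, map_smul]
    rw [h3, norm_smul, Real.norm_of_nonneg (by positivity)] at h1
    have h4 : ‖(fderiv ℝ g x) v‖ = (‖v‖ / h) * ((h / ‖v‖) * ‖(fderiv ℝ g x) v‖) := by
      field_simp
    rw [h4]
    calc (‖v‖ / h) * ((h / ‖v‖) * ‖(fderiv ℝ g x) v‖)
        ≤ (‖v‖ / h) * (2 * S + ω * h) := by
          apply mul_le_mul_of_nonneg_left h1 (by positivity)
      _ = (2 * S / h + ω) * ‖v‖ := by field_simp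

private lemma holderSemi_facts {n : ℕ} {F : Type*} [NormedAddCommGroup F] [NormedSpace ℝ F]
    {τ : ℝ} (hτ0 : 0 < τ) (g : EuclideanSpace ℝ (Fin n) → F) (C : ℝ)
    (hC : ∀ x y, ‖g x - g y‖ ≤ C * ‖x - y‖ ^ τ) :
    0 ≤ holderSemi τ g ∧ ∀ x y, ‖g x - g y‖ ≤ holderSemi τ g * ‖x - y‖ ^ τ := by
  classical
  have heq : holderSemi τ g = ⨆ p : EuclideanSpace ℝ (Fin n) × EuclideanSpace ℝ (Fin n),
      if p.1 = p.2 then (0:ℝ) else ‖g p.1 - g p.2‖ / ‖p.1 - p.2‖ ^ τ := by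
    unfold holderSemi
    congr
  have hb : BddAbove (Set.range fun p : EuclideanSpace ℝ (Fin n) × EuclideanSpace ℝ (Fin n) =>
      if p.1 = p.2 then (0:ℝ) else ‖g p.1 - g p.2‖ / ‖p.1 - p.2‖ ^ τ) := by
    refine ⟨max C 0, ?_⟩
    rintro v ⟨p, rfl⟩
    dsimp only
    split_ifs with hp
    · exact le_max_right _ _
    · have hpn : (0:ℝ) < ‖p.1 - p.2‖ := by
        rw [norm_pos_iff, sub_ne_zero]; exact hp
      have hrp : (0:ℝ) < ‖p.1 - p.2‖ ^ τ := Real.rpow_pos_of_pos hpn τ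
      exact le_max_of_le_left ((div_le_iff₀ hrp).mpr (hC p.1 p.2))
  constructor
  · rw [heq]
    have h0 := le_ciSup hb ((0, 0) : EuclideanSpace ℝ (Fin n) × EuclideanSpace ℝ (Fin n))
    simpa using h0
  · intro x y
    rcases eq_or_ne x y with rfl | hxy
    · simp [Real.zero_rpow hτ0.ne']
    · have hpn : (0:ℝ) < ‖x - y‖ := by rw [norm_pos_iff, sub_ne_zero]; exact hxy
      have hrp : (0:ℝ) < ‖x - y‖ ^ τ := Real.rpow_pos_of_pos hpn τ
      have h1 := le_ciSup hb ((x, y) : EuclideanSpace ℝ (Fin n) × EuclideanSpace ℝ (Fin n))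
      rw [if_neg hxy] at h1
      rw [div_le_iff₀ hrp] at h1
      rw [heq]
      exact h1

private lemma rpow_interp_mono {a b s t : ℝ} (ha : 0 < a) (hab : a ≤ b) (hst : s ≤ t)
    (hs : 0 ≤ s) : a ^ (1 - s) * b ^ s ≤ a ^ (1 - t) * b ^ t := by
  have hb : 0 < b := lt_of_lt_of_le ha hab
  have e : ∀ u : ℝ, a ^ (1 - u) * b ^ u = a * (b / a) ^ u := by
    intro u
    rw [Real.div_rpow hb.le ha.le, Real.rpow_sub ha, Real.rpow_one]
    have hne : a ^ u ≠ 0 := (Real.rpow_pos_of_pos ha u).ne'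
    field_simp
  rw [e s, e t]
  apply mul_le_mul_of_nonneg_left _ ha.le
  exact Real.rpow_le_rpow_of_exponent_le ((one_le_div ha).mpr hab) hst

set_option maxHeartbeats 2000000 in
/-- interpolation inequality
`‖f‖_{C^k_b} ≤ C ‖f‖_{C^0_b}^{1-θ} ‖f‖_{C^{m,τ}}^{θ}` with `θ = k/(m+τ)`. -/
theorem holder_interpolation (n k m : ℕ) (hk : 0 < k) (hm : 0 < m) (hkm : k ≤ m)
    (τ : ℝ) (hτ0 : 0 < τ) (hτ1 : τ < 1) :
    ∃ C : ℝ, 0 < C ∧ ∀ f : EuclideanSpace ℝ (Fin n) → ℂ,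
      MemHolderSpace m τ f →
      CbNorm k f ≤ C * CbNorm 0 f ^ (1 - (k : ℝ) / ((m : ℝ) + τ))
        * CmTauNorm m τ f ^ ((k : ℝ) / ((m : ℝ) + τ)) := by
  classical
  refine ⟨(16:ℝ) ^ (2 * m * m + 2 * m + 1), by positivity, fun f hf => ?_⟩
  obtain ⟨hcd, hbd, hhold⟩ := hf
  set C : ℝ := (16:ℝ) ^ (2 * m * m + 2 * m + 1) with hC_def
  have hCpos : 0 < C := by rw [hC_def]; positivity
  have hC1 : (1:ℝ) ≤ C := by
    rw [hC_def]
    exact one_le_pow₀ (by norm_num)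
  set θ : ℝ := (k : ℝ) / ((m : ℝ) + τ) with hθ_def
  have hmτ : (0:ℝ) < (m:ℝ) + τ := by positivity
  have hθ0 : 0 ≤ θ := by rw [hθ_def]; positivity
  set M : ℕ → ℝ := fun j => ⨆ x, ‖iteratedFDeriv ℝ j f x‖ with hM_def
  have hbdd : ∀ j, j ≤ m →
      BddAbove (Set.range fun x : EuclideanSpace ℝ (Fin n) => ‖iteratedFDeriv ℝ j f x‖) := by
    intro j hj; obtain ⟨Cj, hCj⟩ := hbd j hj
    exact ⟨Cj, by rintro v ⟨x, rfl⟩; exact hCj x⟩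
  have hMle : ∀ j, j ≤ m → ∀ x, ‖iteratedFDeriv ℝ j f x‖ ≤ M j :=
    fun j hj x => le_ciSup (hbdd j hj) x
  have hM0 : ∀ j, j ≤ m → 0 ≤ M j := fun j hj => le_trans (norm_nonneg _) (hMle j hj 0)
  obtain ⟨CH, hCH⟩ := hhold m le_rfl
  obtain ⟨hH0, hH⟩ := holderSemi_facts hτ0 (iteratedFDeriv ℝ m f) CH hCH
  have hCb : ∀ K : ℕ, CbNorm K f = ⨆ i : Fin (K + 1), M i.val := fun K => rfl
  have hA : CbNorm 0 f = M 0 := by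
    rw [hCb 0]
    apply le_antisymm
    · refine ciSup_le fun i => ?_
      have hiv : i.val = 0 := by omega
      rw [hiv]
    · exact le_ciSup (f := fun i : Fin (0 + 1) => M i.val)
        (Finite.bddAbove_range _) (⟨0, by omega⟩ : Fin (0 + 1))
  have hMB : ∀ j, j ≤ m → M j ≤ CmTauNorm m τ f := by
    intro j hj
    have h1 : M j ≤ CbNorm m f := by
      rw [hCb m]
      exact le_ciSup (f := fun i : Fin (m + 1) => M i.val)
        (Finite.bddAbove_range _) (⟨j, by omega⟩ : Fin (m + 1))
    have h2 : (0:ℝ) ≤ ⨆ i : Fin (m + 1), holderSemi τ (iteratedFDeriv ℝ i.val f) :=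
      le_trans hH0 (le_ciSup (f := fun i : Fin (m + 1) => holderSemi τ (iteratedFDeriv ℝ i.val f))
        (Finite.bddAbove_range _) (⟨m, by omega⟩ : Fin (m + 1)))
    unfold CmTauNorm
    linarith
  have hHB : holderSemi τ (iteratedFDeriv ℝ m f) ≤ CmTauNorm m τ f := by
    have h1 : holderSemi τ (iteratedFDeriv ℝ m f)
        ≤ ⨆ i : Fin (m + 1), holderSemi τ (iteratedFDeriv ℝ i.val f) :=
      le_ciSup (f := fun i : Fin (m + 1) => holderSemi τ (iteratedFDeriv ℝ i.val f))
        (Finite.bddAbove_range _) (⟨m, by omega⟩ : Fin (m + 1))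
    have h2 : 0 ≤ CbNorm m f := by
      rw [hCb m]
      exact le_trans (hM0 0 (by omega))
        (le_ciSup (f := fun i : Fin (m + 1) => M i.val)
          (Finite.bddAbove_range _) (⟨0, by omega⟩ : Fin (m + 1)))
    unfold CmTauNorm
    linarith
  have hB0 : 0 ≤ CmTauNorm m τ f := le_trans (hM0 0 (by omega)) (hMB 0 (by omega))
  -- differentiability and oscillation estimates
  have hdiff : ∀ j, j < m → Differentiable ℝ (iteratedFDeriv ℝ j f) := by
    intro j hj
    exact hcd.differentiable_iteratedFDeriv (by exact_mod_cast hj)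
  have hfd : ∀ (j : ℕ) (x y : EuclideanSpace ℝ (Fin n)),
      ‖fderiv ℝ (iteratedFDeriv ℝ j f) x - fderiv ℝ (iteratedFDeriv ℝ j f) y‖
        = ‖iteratedFDeriv ℝ (j + 1) f x - iteratedFDeriv ℝ (j + 1) f y‖ := by
    intro j x y
    rw [fderiv_iteratedFDeriv]
    simp only [Function.comp_apply]
    rw [← LinearIsometryEquiv.map_sub, LinearIsometryEquiv.norm_map]
  have hosc : ∀ j, j < m → ∀ x y : EuclideanSpace ℝ (Fin n),
      ‖iteratedFDeriv ℝ j f x - iteratedFDeriv ℝ j f y‖ ≤ M (j + 1) * ‖x - y‖ := by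
    intro j hj x y
    exact convex_univ.norm_image_sub_le_of_norm_fderiv_le
      (fun z _ => hdiff j hj z)
      (fun z _ => by rw [norm_fderiv_iteratedFDeriv]; exact hMle (j + 1) hj z)
      (mem_univ y) (mem_univ x)
  -- Landau inequalities
  have L1 : ∀ j, 1 ≤ j → j + 1 ≤ m → ∀ h : ℝ, 0 < h →
      M j ≤ 2 * M (j - 1) / h + h * M (j + 1) := by
    intro j hj1 hjm h hh
    obtain ⟨j', rfl⟩ : ∃ j', j = j' + 1 := ⟨j - 1, by omega⟩
    rw [show j' + 1 - 1 = j' from rfl]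
    have hMsup : M (j' + 1) = ⨆ x, ‖iteratedFDeriv ℝ (j' + 1) f x‖ := rfl
    rw [hMsup]
    apply ciSup_le
    intro x
    rw [← norm_fderiv_iteratedFDeriv]
    refine landau_core _ (hdiff j' (by omega)) hh (hMle j' (by omega)) (fun a b hab => ?_) x
    rw [hfd j' b a]
    calc ‖iteratedFDeriv ℝ (j' + 1) f b - iteratedFDeriv ℝ (j' + 1) f a‖
        ≤ M (j' + 1 + 1) * ‖b - a‖ := hosc (j' + 1) (by omega) b a
      _ ≤ h * M (j' + 1 + 1) := by
          rw [mul_comm]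
          exact mul_le_mul_of_nonneg_right hab (hM0 (j' + 1 + 1) (by omega))
  have L2 : ∀ h : ℝ, 0 < h →
      M m ≤ 2 * M (m - 1) / h + h ^ τ * holderSemi τ (iteratedFDeriv ℝ m f) := by
    intro h hh
    obtain ⟨m', hm'⟩ : ∃ m', m = m' + 1 := ⟨m - 1, by omega⟩
    rw [show m - 1 = m' by omega]
    have hMsup : M m = ⨆ x, ‖iteratedFDeriv ℝ m f x‖ := rfl
    rw [hMsup, show m = m' + 1 from hm']
    apply ciSup_le
    intro x
    rw [← norm_fderiv_iteratedFDeriv]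
    refine landau_core _ (hdiff m' (by omega)) hh (hMle m' (by omega)) (fun a b hab => ?_) x
    rw [hfd m' b a, ← hm']
    calc ‖iteratedFDeriv ℝ m f b - iteratedFDeriv ℝ m f a‖
        ≤ holderSemi τ (iteratedFDeriv ℝ m f) * ‖b - a‖ ^ τ := hH b a
      _ ≤ holderSemi τ (iteratedFDeriv ℝ m f) * h ^ τ :=
          mul_le_mul_of_nonneg_left (Real.rpow_le_rpow (norm_nonneg _) hab hτ0.le) hH0
      _ = h ^ τ * holderSemi τ (iteratedFDeriv ℝ m f) := mul_comm _ _
  -- main per-order estimate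
  have main : ∀ i, i ≤ k → M i ≤ C * (M 0 ^ (1 - θ) * CmTauNorm m τ f ^ θ) := by
    intro i hik
    rcases eq_or_lt_of_le (hM0 0 (by omega)) with hA0 | hA0
    · -- M 0 = 0, hence f = 0
      have hf0 : f = fun _ => 0 := by
        funext x
        have h1 : ‖f x‖ ≤ M 0 := by
          have := hMle 0 (by omega) x
          rwa [norm_iteratedFDeriv_zero] at this
        have h2 : ‖f x‖ ≤ 0 := h1.trans hA0.ge
        exact norm_le_zero_iff.mp h2
      have hMi : M i = 0 := by
        rw [hM_def]
        simp only [hf0, iteratedFDeriv_zero_fun, Pi.zero_apply, norm_zero]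
        exact ciSup_const
      rw [hMi]
      have : 0 ≤ M 0 ^ (1 - θ) * CmTauNorm m τ f ^ θ :=
        mul_nonneg (Real.rpow_nonneg (hM0 0 (by omega)) _) (Real.rpow_nonneg hB0 _)
      positivity
    · -- M 0 > 0
      have hBpos : 0 < CmTauNorm m τ f := lt_of_lt_of_le hA0 (hMB 0 (by omega))
      have key : ∀ δ : ℝ, 0 < δ →
          M i ≤ C * ((M 0 + δ) ^ (1 - θ) * (CmTauNorm m τ f + δ) ^ θ) := by
        intro δ hδ
        set P : ℕ → ℝ := fun j => M (min j m) + δ with hP_def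
        have hPpos : ∀ j, 0 < P j := by
          intro j
          have := hM0 (min j m) (min_le_right _ _)
          simp only [hP_def]
          linarith
        have hQpos : 0 < CmTauNorm m τ f + δ := by linarith
        have hmidP : ∀ j, 1 ≤ j → j + 1 ≤ m → ∀ h : ℝ, 0 < h →
            P j ≤ 2 * P (j - 1) / h + h * P (j + 1) := by
          intro j hj1 hjm h hh
          have e0 : min j m = j := min_eq_left (by omega)
          have e1 : min (j - 1) m = j - 1 := min_eq_left (by omega)
          have e2 : min (j + 1) m = j + 1 := min_eq_left (by omega)
          simp only [hP_def, e0, e1, e2]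
          have t1 := L1 j hj1 hjm h hh
          have t2 : δ ≤ 2 * δ / h + h * δ := by
            have expand : 2 * δ / h + h * δ - δ = δ * (2 + h * h - h) / h := by
              field_simp
            have hnum : (0:ℝ) ≤ 2 + h * h - h := by nlinarith [sq_nonneg (h - 1)]
            have : 0 ≤ δ * (2 + h * h - h) / h := by positivity
            linarith
          have expand1 : 2 * (M (j - 1) + δ) / h = 2 * M (j - 1) / h + 2 * δ / h := by ring
          rw [expand1]
          linarith
        have htopP : ∀ h : ℝ, 0 < h →
            P m ≤ 2 * P (m - 1) / h + h ^ τ * (CmTauNorm m τ f + δ) := by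
          intro h hh
          have e0 : min m m = m := min_self _
          have e1 : min (m - 1) m = m - 1 := min_eq_left (by omega)
          simp only [hP_def, e0, e1]
          have t1 := L2 h hh
          have hrp : (0:ℝ) < h ^ τ := Real.rpow_pos_of_pos hh τ
          have t2 : δ ≤ 2 * δ / h + h ^ τ * δ := by
            rcases le_or_gt h 2 with h2 | h2
            · have hd : (1:ℝ) ≤ 2 / h := (le_div_iff₀ hh).mpr (by linarith)
              have hd2 : δ * 1 ≤ δ * (2 / h) := mul_le_mul_of_nonneg_left hd hδ.le
              have e : δ * (2 / h) = 2 * δ / h := by ring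
              nlinarith [mul_pos hrp hδ]
            · have h1τ : (1:ℝ) ≤ h ^ τ := by
                calc (1:ℝ) = (1:ℝ) ^ τ := (Real.one_rpow τ).symm
                  _ ≤ h ^ τ := Real.rpow_le_rpow (by norm_num) (by linarith) hτ0.le
              have : δ * 1 ≤ δ * h ^ τ := mul_le_mul_of_nonneg_left h1τ hδ.le
              have hpos : 0 ≤ 2 * δ / h := by positivity
              nlinarith
          have t3 : h ^ τ * holderSemi τ (iteratedFDeriv ℝ m f)
              ≤ h ^ τ * CmTauNorm m τ f := mul_le_mul_of_nonneg_left hHB hrp.le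
          have expand1 : 2 * (M (m - 1) + δ) / h = 2 * M (m - 1) / h + 2 * δ / h := by ring
          rw [expand1]
          have expand2 : h ^ τ * (CmTauNorm m τ f + δ)
              = h ^ τ * CmTauNorm m τ f + h ^ τ * δ := by ring
          rw [expand2]
          linarith
        rcases Nat.eq_zero_or_pos i with rfl | hi1
        · -- i = 0
          have hsum : (M 0 + δ) ^ (1 - θ) * (M 0 + δ) ^ θ = M 0 + δ := by
            rw [← Real.rpow_add (by linarith : (0:ℝ) < M 0 + δ)]
            norm_num
          have h2 : (M 0 + δ) ^ θ ≤ (CmTauNorm m τ f + δ) ^ θ :=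
            Real.rpow_le_rpow (by linarith) (by linarith [hMB 0 (by omega : 0 ≤ m)]) hθ0
          calc M 0 ≤ M 0 + δ := by linarith
            _ = (M 0 + δ) ^ (1 - θ) * (M 0 + δ) ^ θ := hsum.symm
            _ ≤ (M 0 + δ) ^ (1 - θ) * (CmTauNorm m τ f + δ) ^ θ :=
                mul_le_mul_of_nonneg_left h2 (Real.rpow_nonneg (by linarith) _)
            _ ≤ C * ((M 0 + δ) ^ (1 - θ) * (CmTauNorm m τ f + δ) ^ θ) := by
                nlinarith [mul_nonneg (Real.rpow_nonneg (show (0:ℝ) ≤ M 0 + δ by linarith) (1 - θ))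
                  (Real.rpow_nonneg (show (0:ℝ) ≤ CmTauNorm m τ f + δ by linarith) θ)]
        · -- 1 ≤ i
          have happ := discrete_pos m i hi1 (le_trans hik hkm) hτ0 hτ1 P
            (CmTauNorm m τ f + δ) hPpos hQpos hmidP htopP
          have ei : min i m = i := min_eq_left (by omega)
          have e0 : min 0 m = 0 := min_eq_left (by omega)
          simp only [hP_def, ei, e0] at happ
          have hmono : (M 0 + δ) ^ (1 - (i:ℝ)/((m:ℝ)+τ)) * (CmTauNorm m τ f + δ) ^ ((i:ℝ)/((m:ℝ)+τ))
              ≤ (M 0 + δ) ^ (1 - θ) * (CmTauNorm m τ f + δ) ^ θ := by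
            apply rpow_interp_mono (by linarith) (by linarith [hMB 0 (by omega : 0 ≤ m)])
            · have hik' : (i:ℝ) ≤ (k:ℝ) := by exact_mod_cast hik
              rw [hθ_def]
              gcongr
            · positivity
          calc M i ≤ M i + δ := by linarith
            _ ≤ (16:ℝ) ^ (2 * m * m + 2 * m + 1) * ((M 0 + δ) ^ (1 - (i:ℝ)/((m:ℝ)+τ))
                * (CmTauNorm m τ f + δ) ^ ((i:ℝ)/((m:ℝ)+τ))) := happ
            _ ≤ C * ((M 0 + δ) ^ (1 - θ) * (CmTauNorm m τ f + δ) ^ θ) := by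
                rw [hC_def]
                exact mul_le_mul_of_nonneg_left hmono (by positivity)
      -- pass to the limit δ → 0⁺
      have ht : Tendsto (fun δ : ℝ => C * ((M 0 + δ) ^ (1 - θ) * (CmTauNorm m τ f + δ) ^ θ))
          (𝓝[>] (0:ℝ)) (𝓝 (C * (M 0 ^ (1 - θ) * CmTauNorm m τ f ^ θ))) := by
        have h1 : Tendsto (fun δ : ℝ => M 0 + δ) (𝓝[>] (0:ℝ)) (𝓝 (M 0)) := by
          have hb : Tendsto (fun δ : ℝ => M 0 + δ) (𝓝 (0:ℝ)) (𝓝 (M 0 + 0)) :=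
            tendsto_const_nhds.add tendsto_id
          rw [add_zero] at hb
          exact hb.mono_left nhdsWithin_le_nhds
        have h2 : Tendsto (fun δ : ℝ => CmTauNorm m τ f + δ) (𝓝[>] (0:ℝ))
            (𝓝 (CmTauNorm m τ f)) := by
          have hb : Tendsto (fun δ : ℝ => CmTauNorm m τ f + δ) (𝓝 (0:ℝ))
              (𝓝 (CmTauNorm m τ f + 0)) := tendsto_const_nhds.add tendsto_id
          rw [add_zero] at hb
          exact hb.mono_left nhdsWithin_le_nhds
        exact ((h1.rpow_const (Or.inl hA0.ne')).mul
          (h2.rpow_const (Or.inl hBpos.ne'))).const_mul C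
      refine ge_of_tendsto ht ?_
      filter_upwards [self_mem_nhdsWithin] with δ hδ
      exact key δ hδ
  -- conclude
  have goal1 : CbNorm k f ≤ C * (M 0 ^ (1 - θ) * CmTauNorm m τ f ^ θ) := by
    rw [hCb k]
    apply ciSup_le
    intro i
    exact main i.val (Nat.lt_succ_iff.mp i.isLt)
  calc CbNorm k f ≤ C * (M 0 ^ (1 - θ) * CmTauNorm m τ f ^ θ) := goal1
    _ = C * CbNorm 0 f ^ (1 - θ) * CmTauNorm m τ f ^ θ := by rw [hA, mul_assoc]
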